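/- Let Q be a quantity space over a scalar system K and let B = {b₁, …, bₙ} be a basis for Q. A quantity q ∈ Q is invertible if and only if μ_B(q) ≠ 0, and in that case μ_B(q⁻¹) = μ_B(q)⁻¹ = 1/μ_B(q). -/

import Mathlib

/-- A *scalable (commutative) monoid* over a scalar system `K ⊆ F`:
`K` is a subset of the field `F` closed under addition, containing `1`,
closed under multiplication and under inverses of nonzero elements
(so the nonzero elements of `K` form a group under multiplication),
together with a scalar multiplication `smul` satisfying the axioms
`1 • q = q`, `α • (β • q) = (α β) • q` and `α • (q * q') = (α • q) * q'`
for scalars in `K`. -/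
structure ScalableMonoid (F : Type*) [Field F] (Q : Type*) [CommMonoid Q] where
  K : Set F
  one_mem : (1 : F) ∈ K
  add_mem : ∀ {a b : F}, a ∈ K → b ∈ K → a + b ∈ K
  mul_mem : ∀ {a b : F}, a ∈ K → b ∈ K → a * b ∈ K
  inv_mem : ∀ {a : F}, a ∈ K → a ≠ 0 → a⁻¹ ∈ K
  smul : F → Q → Q
  smul_one : ∀ q : Q, smul 1 q = q
  smul_smul : ∀ {a b : F}, a ∈ K → b ∈ K → ∀ q : Q, smul a (smul b q) = smul (a * b) q
  smul_mul : ∀ {a : F}, a ∈ K → ∀ q q' : Q, smul a (q * q') = smul a q * q'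

/-- `b : Fin n → Qˣ` (a list of invertible quantities) is a basis for the scalable
monoid `M` if every quantity has a unique expansion `q = μ • ∏ i, b i ^ k i`
with `μ ∈ K` and integer exponents `k`. -/
def ScalableMonoid.IsBasis {F : Type*} [Field F] {Q : Type*} [CommMonoid Q]
    (M : ScalableMonoid F Q) {n : ℕ} (b : Fin n → Qˣ) : Prop :=
  ∀ q : Q, ∃! p : M.K × (Fin n → ℤ),
    q = M.smul (p.1 : F) (↑(∏ i, b i ^ p.2 i) : Q)

/-- A quantity space is a scalable monoid having a (finite) basis. -/
def ScalableMonoid.IsQuantitySpace {F : Type*} [Field F] {Q : Type*} [CommMonoid Q]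
    (M : ScalableMonoid F Q) : Prop :=
  ∃ (n : ℕ) (b : Fin n → Qˣ), M.IsBasis b

/-- The measure `μ_B(q)`: the unique scalar in the expansion of `q` relative to
the basis `B`. -/
noncomputable def ScalableMonoid.measure {F : Type*} [Field F] {Q : Type*} [CommMonoid Q]
    (M : ScalableMonoid F Q) {n : ℕ} {b : Fin n → Qˣ} (hB : M.IsBasis b) (q : Q) : F :=
  ((hB q).choose.1 : F)

/-- Quantities `q, q'` are equidimensional (`q ~ q'`) if `α • q = β • q'`
for some scalars `α, β ∈ K`. -/
def ScalableMonoid.Equidim {F : Type*} [Field F] {Q : Type*} [CommMonoid Q]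
    (M : ScalableMonoid F Q) (q q' : Q) : Prop :=
  ∃ α β : F, α ∈ M.K ∧ β ∈ M.K ∧ M.smul α q = M.smul β q'

namespace ScalableMonoid

variable {F : Type*} [Field F] {Q : Type*} [CommMonoid Q] (M : ScalableMonoid F Q)

lemma smul_mul_smul' {α β : F} (hα : α ∈ M.K) (hβ : β ∈ M.K) (x y : Q) :
    M.smul α x * M.smul β y = M.smul (α * β) (x * y) := by
  rw [← M.smul_mul hα, mul_comm x (M.smul β y), ← M.smul_mul hβ,
      M.smul_smul hα hβ, mul_comm y x]

lemma prod_zpow_mul {n : ℕ} (b : Fin n → Qˣ) (k m : Fin n → ℤ) :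
    (∏ i, b i ^ k i) * (∏ i, b i ^ m i) = ∏ i, b i ^ (k i + m i) := by
  rw [← Finset.prod_mul_distrib]
  exact Finset.prod_congr rfl fun i _ => (zpow_add (b i) (k i) (m i)).symm

lemma measure_unique {n : ℕ} {b : Fin n → Qˣ} (hB : M.IsBasis b) (q : Q)
    (μ : M.K) (k : Fin n → ℤ) (h : q = M.smul (μ : F) (↑(∏ i, b i ^ k i) : Q)) :
    M.measure hB q = (μ : F) := by
  have := (hB q).choose_spec.2 (μ, k) h
  exact congrArg (fun p : M.K × (Fin n → ℤ) => (p.1 : F)) this.symm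

lemma measure_mul_measure_inv {n : ℕ} {b : Fin n → Qˣ} (hB : M.IsBasis b) (u : Qˣ) :
    M.measure hB (u : Q) * M.measure hB ((u⁻¹ : Qˣ) : Q) = 1 := by
  set p := (hB (u : Q)).choose with hp
  set r := (hB ((u⁻¹ : Qˣ) : Q)).choose with hr
  have h1 : (u : Q) = M.smul (p.1 : F) (↑(∏ i, b i ^ p.2 i) : Q) :=
    (hB (u : Q)).choose_spec.1
  have h2 : ((u⁻¹ : Qˣ) : Q) = M.smul (r.1 : F) (↑(∏ i, b i ^ r.2 i) : Q) :=
    (hB ((u⁻¹ : Qˣ) : Q)).choose_spec.1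
  have hmul : (1 : Q) = M.smul ((p.1 : F) * (r.1 : F))
      (↑(∏ i, b i ^ (p.2 i + r.2 i)) : Q) := by
    have h0 : (1 : Q) = (u : Q) * ((u⁻¹ : Qˣ) : Q) := by
      rw [← Units.val_mul, mul_inv_cancel, Units.val_one]
    rw [h0, h1, h2, M.smul_mul_smul' p.1.2 r.1.2, ← Units.val_mul,
        prod_zpow_mul]
  have e1 := M.measure_unique hB 1 ⟨(p.1 : F) * (r.1 : F), M.mul_mem p.1.2 r.1.2⟩
      (fun i => p.2 i + r.2 i) hmul
  have e2 := M.measure_unique hB 1 ⟨(1 : F), M.one_mem⟩ (fun _ => 0) (by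
    simp [M.smul_one])
  have : M.measure hB (u : Q) = (p.1 : F) := M.measure_unique hB _ p.1 p.2 h1
  have : M.measure hB ((u⁻¹ : Qˣ) : Q) = (r.1 : F) := M.measure_unique hB _ r.1 r.2 h2
  simp only [M.measure_unique hB _ p.1 p.2 h1, M.measure_unique hB _ r.1 r.2 h2]
  have e1' : M.measure hB 1 = (p.1 : F) * (r.1 : F) := e1
  have e2' : M.measure hB 1 = (1 : F) := e2
  exact e1'.symm.trans e2'

end ScalableMonoid

/-- For a quantity space `Q` with basis `B`, a quantity `q` is
invertible iff `μ_B(q) ≠ 0`, and in that case `μ_B(q⁻¹) = μ_B(q)⁻¹`. -/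

theorem isUnit_iff_measure_ne_zero {F : Type*} [Field F] {Q : Type*} [CommMonoid Q]
    (M : ScalableMonoid F Q) {n : ℕ} {b : Fin n → Qˣ} (hB : M.IsBasis b) (q : Q) :
    (IsUnit q ↔ M.measure hB q ≠ 0) ∧
    (∀ u : Qˣ, (u : Q) = q →
      M.measure hB ((u⁻¹ : Qˣ) : Q) = (M.measure hB q)⁻¹) := by
  constructor
  · constructor
    · rintro ⟨u, rfl⟩
      exact left_ne_zero_of_mul_eq_one (M.measure_mul_measure_inv hB u)
    · intro hne
      set p := (hB q).choose with hp
      have h1 : q = M.smul (p.1 : F) (↑(∏ i, b i ^ p.2 i) : Q) :=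
        (hB q).choose_spec.1
      have hμ : M.measure hB q = (p.1 : F) := rfl
      rw [hμ] at hne
      refine IsUnit.of_mul_eq_one (a := q)
        (M.smul ((p.1 : F)⁻¹) (↑(∏ i, b i ^ (-(p.2 i))) : Q)) ?_
      rw [h1, M.smul_mul_smul' p.1.2 (M.inv_mem p.1.2 hne), ← Units.val_mul,
          ScalableMonoid.prod_zpow_mul, mul_inv_cancel₀ hne]
      simp [M.smul_one]
  · intro u hu
    subst hu
    have h := M.measure_mul_measure_inv hB u
    have hne : M.measure hB (u : Q) ≠ 0 := left_ne_zero_of_mul_eq_one h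
    exact (inv_eq_of_mul_eq_one_right h).symm
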